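/- arXiv:2303.13920 — 5 statements merged into one kernel-verified Lean document; each statement's English description precedes it below -/
import Mathlib

section
/- Let K ⊂ ℤ² be a two-dimensional convex symmetric neighbourhood containing 0 and u a rational unit vector with |K ∩ l_u| ≥ 3 odd by symmetry. Suppose x ∈ K with ⟨x,u⟩ ≥ 2ρ_u, and let y = ((|K∩l_u|−1)/2)·u^⊥ be the extreme point of K on l_u, where u^⊥ is the primitive lattice vector generating l_u. Then the triangle with vertices x, y, −y contains at least (|K∩l_u|−1)/2 lattice points on the line l_u(1). -/
open Set

/-- The embedding of the lattice `ℤ²` into `ℝ²`. -/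
def coev (x : ℤ × ℤ) : ℝ × ℝ := ((x.1 : ℝ), (x.2 : ℝ))

/-- The standard inner product on `ℝ²`. -/
def dotp (u v : ℝ × ℝ) : ℝ := u.1 * v.1 + u.2 * v.2

set_option maxHeartbeats 1000000 in
/-- Let `K` be a two-dimensional convex symmetric neighbourhood containing `0`
and `u` a rational unit vector with `k = |K ∩ l_u| ≥ 3` odd. If `x ∈ K` with `⟨x,u⟩ ≥ 2ρ_u`
and `y = ((k-1)/2)·u^⊥` (with `u^⊥` the primitive lattice generator of `l_u`), then the
triangle with vertices `x`, `y`, `-y` contains at least `(k-1)/2` lattice points on the line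
`l_u(1)`. -/
theorem stmt_2 (S : Set (ℝ × ℝ)) (hSbdd : Bornology.IsBounded S) (hSconv : Convex ℝ S)
    (hSsym : ∀ x ∈ S, -x ∈ S)
    (K : Set (ℤ × ℤ)) (hK : K = {x : ℤ × ℤ | coev x ∈ S})
    (h0K : (0, 0) ∈ K)
    (h2d : ∀ u : ℝ × ℝ, ∃ x ∈ K, ∀ t : ℝ, coev x ≠ t • u)
    (u : ℝ × ℝ) (hunit : u.1 ^ 2 + u.2 ^ 2 = 1)
    (ρ : ℝ) (hρ : IsLeast {r : ℝ | 0 < r ∧ ∃ x : ℤ × ℤ, dotp u (coev x) = r} ρ)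
    (w : ℤ × ℤ) (hw : ∀ z : ℤ × ℤ, dotp u (coev z) = 0 ↔ ∃ m : ℤ, z = m • w)
    (k : ℕ) (hk : k = (K ∩ {z : ℤ × ℤ | dotp u (coev z) = 0}).ncard)
    (hk3 : 3 ≤ k) (hkodd : Odd k)
    (x : ℤ × ℤ) (hxK : x ∈ K) (hx : 2 * ρ ≤ dotp u (coev x))
    (y : ℤ × ℤ) (hy : y = (((k - 1) / 2 : ℕ) : ℤ) • w) :
    (k - 1) / 2 ≤
      {z : ℤ × ℤ |
        coev z ∈ convexHull ℝ {coev x, coev y, -coev y} ∧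
        dotp u (coev z) = ρ}.ncard := by
  clear hSbdd hSconv hSsym hK h0K h2d hkodd hxK
  obtain ⟨⟨hρpos, z0, hz0⟩, -⟩ := hρ
  set dx := dotp u (coev x) with hdx_def
  have hdxpos : 0 < dx := lt_of_lt_of_le (by linarith) hx
  set t : ℝ := ρ / dx with ht_def
  have ht0 : 0 < t := div_pos hρpos hdxpos
  have htdx : t * dx = ρ := div_mul_cancel₀ ρ (ne_of_gt hdxpos)
  have ht2 : t ≤ 1 / 2 := by rw [ht_def, div_le_iff₀ hdxpos]; linarith
  -- facts about w
  have hw0 : dotp u (coev w) = 0 := (hw w).mpr ⟨1, (one_smul ℤ w).symm⟩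
  have hwne : w ≠ 0 := by
    intro h
    have hsub : (K ∩ {z : ℤ × ℤ | dotp u (coev z) = 0}) ⊆ {(0 : ℤ × ℤ)} := by
      rintro z ⟨-, hz⟩
      obtain ⟨m, hm⟩ := (hw z).mp hz
      simp [hm, h]
    have := Set.ncard_le_ncard hsub (Set.finite_singleton _)
    rw [Set.ncard_singleton] at this
    omega
  have hwR : coev w ≠ 0 := by
    intro h
    apply hwne
    have h1 := congrArg Prod.fst h
    have h2 := congrArg Prod.snd h
    simp [coev] at h1 h2
    exact Prod.ext_iff.mpr ⟨h1, h2⟩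
  -- everything orthogonal to u is a multiple of coev w
  have hperp : ∀ p : ℝ × ℝ, dotp u p = 0 → ∃ c : ℝ, p = c • coev w := by
    intro p hp
    have hp' : u.1 * p.1 + u.2 * p.2 = 0 := hp
    have hw' : u.1 * (coev w).1 + u.2 * (coev w).2 = 0 := hw0
    have hcross : p.1 * (coev w).2 = p.2 * (coev w).1 := by
      linear_combination (u.1 * (coev w).2 - u.2 * (coev w).1) * hp' +
        (u.2 * p.1 - u.1 * p.2) * hw' +
        (p.2 * (coev w).1 - p.1 * (coev w).2) * hunit
    rcases eq_or_ne (coev w).1 0 with h1 | h1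
    · have h2 : (coev w).2 ≠ 0 := by
        intro h2
        exact hwR (Prod.ext_iff.mpr ⟨h1, h2⟩)
      refine ⟨p.2 / (coev w).2, Prod.ext_iff.mpr ⟨?_, ?_⟩⟩
      · have hcross' : p.1 * (coev w).2 = 0 := by rw [hcross, h1, mul_zero]
        have hp1 : p.1 = 0 := by
          rcases mul_eq_zero.mp hcross' with h | h
          · exact h
          · exact absurd h h2
        simp [Prod.smul_fst, smul_eq_mul, h1, hp1]
      · simp only [Prod.smul_snd, smul_eq_mul]
        field_simp
    · refine ⟨p.1 / (coev w).1, Prod.ext_iff.mpr ⟨?_, ?_⟩⟩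
      · simp only [Prod.smul_fst, smul_eq_mul]
        field_simp
      · simp only [Prod.smul_snd, smul_eq_mul]
        field_simp
        linarith [hcross]
  -- parametrize the intersection of the triangle with the line l_u(1)
  have hdiff : dotp u (t • coev x - coev z0) = 0 := by
    have hlin : dotp u (t • coev x - coev z0) = t * dx - dotp u (coev z0) := by
      simp only [dotp, hdx_def, Prod.fst_sub, Prod.snd_sub, Prod.smul_fst, Prod.smul_snd,
        smul_eq_mul]
      ring
    rw [hlin, hz0, htdx, sub_self]
  obtain ⟨c, hc⟩ := hperp _ hdiff
  have hcx : t • coev x = coev z0 + c • coev w := by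
    rw [add_comm]; exact eq_add_of_sub_eq hc
  set M : ℕ := (k - 1) / 2 with hM
  have hM1 : 1 ≤ M := by omega
  have hmR : (0 : ℝ) < (M : ℝ) := by exact_mod_cast hM1
  have coevy : coev y = (M : ℝ) • coev w := by
    rw [hy]
    refine Prod.ext_iff.mpr ⟨?_, ?_⟩ <;>
      simp [coev, Prod.smul_fst, Prod.smul_snd, smul_eq_mul] <;> push_cast <;> ring
  set sm : ℝ := c - (1 - t) * (M : ℝ) with hsm
  set sp : ℝ := c + (1 - t) * (M : ℝ) with hsp
  set A : ℤ := ⌈sm⌉ with hA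
  set B : ℤ := ⌊sp⌋ with hB
  have hBA : (M : ℤ) ≤ B + 1 - A := by
    have h1 : sm + ((M : ℤ) : ℝ) ≤ sp := by push_cast; nlinarith
    have h2 : ⌊sm⌋ + (M : ℤ) ≤ B := by
      rw [hB, ← Int.floor_add_intCast sm (M : ℤ)]
      exact Int.floor_le_floor h1
    have h3 : A ≤ ⌊sm⌋ + 1 := Int.ceil_le_floor_add_one sm
    omega
  have hmem : ∀ j : ℤ, A ≤ j → j ≤ B →
      (z0 + j • w) ∈ {z : ℤ × ℤ |
        coev z ∈ convexHull ℝ {coev x, coev y, -coev y} ∧ dotp u (coev z) = ρ} := by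
    intro j hjA hjB
    have hjlo : sm ≤ (j : ℝ) := by exact_mod_cast Int.ceil_le.mp hjA
    have hjhi : (j : ℝ) ≤ sp := by exact_mod_cast Int.le_floor.mp hjB
    set α : ℝ := ((1 - t) + ((j : ℝ) - c) / (M : ℝ)) / 2 with hαd
    set β : ℝ := ((1 - t) - ((j : ℝ) - c) / (M : ℝ)) / 2 with hβd
    have hdiv1 : -(1 - t) ≤ ((j : ℝ) - c) / (M : ℝ) := by
      rw [le_div_iff₀ hmR]; rw [hsm] at hjlo; nlinarith
    have hdiv2 : ((j : ℝ) - c) / (M : ℝ) ≤ (1 - t) := by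
      rw [div_le_iff₀ hmR]; rw [hsp] at hjhi; nlinarith
    have hα : 0 ≤ α := by rw [hαd]; linarith
    have hβ : 0 ≤ β := by rw [hβd]; linarith
    have hcoev : coev (z0 + j • w) = coev z0 + (j : ℝ) • coev w := by
      refine Prod.ext_iff.mpr ⟨?_, ?_⟩ <;>
        simp [coev, Prod.smul_fst, Prod.smul_snd, Prod.fst_add, Prod.snd_add, smul_eq_mul] <;>
        push_cast <;> ring
    constructor
    · -- membership in the convex hull
      have hjc : (j : ℝ) = c + (α - β) * (M : ℝ) := by
        rw [hαd, hβd]; field_simp; ring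
      have hPt : coev (z0 + j • w) = t • coev x + α • coev y + β • (-coev y) := by
        rw [hcoev, hcx, coevy, hjc]
        module
      rw [hPt]
      have hH := convex_convexHull ℝ ({coev x, coev y, -coev y} : Set (ℝ × ℝ))
      have hxH : coev x ∈ convexHull ℝ ({coev x, coev y, -coev y} : Set (ℝ × ℝ)) :=
        subset_convexHull _ _ (by simp)
      have hyH : coev y ∈ convexHull ℝ ({coev x, coev y, -coev y} : Set (ℝ × ℝ)) :=
        subset_convexHull _ _ (by simp)
      have hnyH : -coev y ∈ convexHull ℝ ({coev x, coev y, -coev y} : Set (ℝ × ℝ)) :=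
        subset_convexHull _ _ (by simp)
      have hr : α + β = 1 - t := by rw [hαd, hβd]; ring
      have hrpos : 0 < α + β := by rw [hr]; linarith
      have hQ := hH hyH hnyH (div_nonneg hα hrpos.le) (div_nonneg hβ hrpos.le)
        (by field_simp)
      have hfin := hH hxH hQ ht0.le hrpos.le (by rw [hr]; ring)
      have hsplit : (α + β) • ((α / (α + β)) • coev y + (β / (α + β)) • (-coev y)) =
          α • coev y + β • (-coev y) := by
        match_scalars <;> field_simp
      rw [add_assoc, ← hsplit]
      exact hfin
    · -- lies on the line
      have hlin : dotp u (coev z0 + (j : ℝ) • coev w) =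
          dotp u (coev z0) + (j : ℝ) * dotp u (coev w) := by
        simp only [dotp, Prod.fst_add, Prod.snd_add, Prod.smul_fst, Prod.smul_snd, smul_eq_mul]
        ring
      rw [hcoev, hlin, hz0, hw0]
      ring
  -- finiteness of the target set
  set T := {z : ℤ × ℤ |
    coev z ∈ convexHull ℝ {coev x, coev y, -coev y} ∧ dotp u (coev z) = ρ} with hT
  have hfinT : T.Finite := by
    have hcomp : IsCompact (convexHull ℝ ({coev x, coev y, -coev y} : Set (ℝ × ℝ))) :=
      (Set.toFinite _).isCompact_convexHull (𝕜 := ℝ)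
    obtain ⟨R, hR⟩ := hcomp.isBounded.exists_norm_le
    have hbound : ∀ n : ℤ, |(n : ℝ)| ≤ R → -⌈R⌉ ≤ n ∧ n ≤ ⌈R⌉ := by
      intro n hn
      have hceil := Int.le_ceil R
      have h1 : (n : ℝ) ≤ ((⌈R⌉ : ℤ) : ℝ) := le_trans (le_trans (le_abs_self _) hn) hceil
      have h2 : -((⌈R⌉ : ℤ) : ℝ) ≤ (n : ℝ) := by
        have := neg_abs_le (n : ℝ); linarith
      exact ⟨by exact_mod_cast h2, by exact_mod_cast h1⟩
    have hsub : T ⊆ ↑(Finset.Icc ((-⌈R⌉, -⌈R⌉) : ℤ × ℤ) (⌈R⌉, ⌈R⌉)) := by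
      rintro z ⟨hz, -⟩
      have hn := hR _ hz
      rw [Prod.norm_def] at hn
      have h1 : |((z.1 : ℤ) : ℝ)| ≤ R := by
        have := le_max_left ‖(coev z).1‖ ‖(coev z).2‖
        simpa [coev, Real.norm_eq_abs] using le_trans this hn
      have h2 : |((z.2 : ℤ) : ℝ)| ≤ R := by
        have := le_max_right ‖(coev z).1‖ ‖(coev z).2‖
        simpa [coev, Real.norm_eq_abs] using le_trans this hn
      obtain ⟨ha1, hb1⟩ := hbound _ h1
      obtain ⟨ha2, hb2⟩ := hbound _ h2
      simp [Finset.mem_Icc, Prod.le_def]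
      exact ⟨⟨ha1, ha2⟩, hb1, hb2⟩
    exact Set.Finite.subset (Finset.finite_toSet _) hsub
  -- counting
  have hinj : Function.Injective (fun j : ℤ => z0 + j • w) := by
    intro a b hab
    have hf := congrArg (fun v : ℤ × ℤ => v.1) hab
    have hs := congrArg (fun v : ℤ × ℤ => v.2) hab
    simp only [Prod.fst_add, Prod.snd_add, Prod.smul_fst, Prod.smul_snd, smul_eq_mul] at hf hs
    have hf' : a * w.1 = b * w.1 := by linarith
    have hs' : a * w.2 = b * w.2 := by linarith
    have hwc : w.1 ≠ 0 ∨ w.2 ≠ 0 := by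
      by_contra h
      push_neg at h
      exact hwne (Prod.ext_iff.mpr ⟨h.1, h.2⟩)
    rcases hwc with h | h
    · exact mul_right_cancel₀ h hf'
    · exact mul_right_cancel₀ h hs'
  set F : Finset (ℤ × ℤ) := (Finset.Icc A B).image (fun j => z0 + j • w) with hF
  have hFsub : ↑F ⊆ T := by
    intro z hz
    rw [hF, Finset.coe_image] at hz
    obtain ⟨j, hj, rfl⟩ := hz
    rw [Finset.mem_coe, Finset.mem_Icc] at hj
    exact hmem j hj.1 hj.2
  have hle := Set.ncard_le_ncard hFsub hfinT
  rw [Set.ncard_coe_finset] at hle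
  have hcard : F.card = (B + 1 - A).toNat := by
    rw [hF, Finset.card_image_of_injective _ hinj, Int.card_Icc]
  omega
end

section
/- Let K ⊂ ℤ² be a two-dimensional convex symmetric neighbourhood, θ a threshold with U = U(K,θ), and u an isolated stable direction. If H is a helping set for u and some site outside l_u eventually becomes infected starting from H_u ∪ H, then H ∩ l_u = ∅. -/
open Set

/-- The translated punctured neighbourhood `x + (K \ {0})`. -/
def nbhd (K : Set (ℤ × ℤ)) (x : ℤ × ℤ) : Set (ℤ × ℤ) :=
  {y | ∃ k ∈ K, k ≠ (0, 0) ∧ y = x + k}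

/-- The closure `[A]` of `A` under the threshold bootstrap percolation dynamics with
neighbourhood `K` and threshold `θ`. -/
def tclosure (K : Set (ℤ × ℤ)) (θ : ℕ) (A : Set (ℤ × ℤ)) : Set (ℤ × ℤ) :=
  ⋂₀ {B | A ⊆ B ∧ ∀ x : ℤ × ℤ, θ ≤ (B ∩ nbhd K x).ncard → x ∈ B}

lemma dotp_coev_add (u : ℝ × ℝ) (a b : ℤ × ℤ) :
    dotp u (coev (a + b)) = dotp u (coev a) + dotp u (coev b) := by
  simp only [dotp, coev, Prod.fst_add, Prod.snd_add]
  push_cast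
  ring

/-- with `K` a two-dimensional convex symmetric neighbourhood, threshold `θ`,
`u` an isolated stable direction with difficulty `α(u) = θ - |K ∩ H_u| > 0`, and `H` a
helping set for `u`: if some site outside `l_u` (and not initially infected) eventually
becomes infected starting from `H_u ∪ H`, then `H ∩ l_u = ∅`. -/
theorem stmt_4 (S : Set (ℝ × ℝ)) (hSbdd : Bornology.IsBounded S) (hSconv : Convex ℝ S)
    (hSsym : ∀ x ∈ S, -x ∈ S)
    (K : Set (ℤ × ℤ)) (hK : K = {x : ℤ × ℤ | coev x ∈ S})
    (h0K : (0, 0) ∈ K)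
    (h2d : ∀ u : ℝ × ℝ, ∃ x ∈ K, ∀ t : ℝ, coev x ≠ t • u)
    (θ : ℕ) (hθ : 0 < θ)
    (u : ℝ × ℝ) (hunit : u.1 ^ 2 + u.2 ^ 2 = 1)
    (Hu : Set (ℤ × ℤ)) (hHu : Hu = {x : ℤ × ℤ | dotp u (coev x) < 0})
    (hstable : tclosure K θ Hu = Hu)
    (α : ℤ) (hα : α = (θ : ℤ) - (K ∩ Hu).ncard) (hαpos : 0 < α)
    -- `H` is a helping set for `u`
    (H : Set (ℤ × ℤ)) (hHfin : H.Finite) (hHcard : (H.ncard : ℤ) = α)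
    (hHhelp : (tclosure K θ (Hu ∪ H) \ Hu).Infinite)
    -- some site outside `l_u` eventually becomes infected
    (hout : ∃ x ∈ tclosure K θ (Hu ∪ H), x ∉ Hu ∪ H ∧ dotp u (coev x) ≠ 0) :
    H ∩ {x : ℤ × ℤ | dotp u (coev x) = 0} = ∅ := by
  by_contra hne
  obtain ⟨h, hhH, hhl⟩ := Set.nonempty_iff_ne_empty.2 hne
  have hhl : dotp u (coev h) = 0 := hhl
  -- K is finite
  have hKfin : K.Finite := by
    obtain ⟨R, hR⟩ := hSbdd.subset_closedBall 0
    have hsub : K ⊆ (Set.Icc (-⌈R⌉) ⌈R⌉ ×ˢ Set.Icc (-⌈R⌉) ⌈R⌉ : Set (ℤ × ℤ)) := by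
      intro x hx
      rw [hK] at hx
      have hx' := hR hx
      rw [Metric.mem_closedBall, dist_zero_right, Prod.norm_def] at hx'
      have h1 : |(x.1 : ℝ)| ≤ R := le_trans (le_max_left _ _) hx'
      have h2 : |(x.2 : ℝ)| ≤ R := le_trans (le_max_right _ _) hx'
      rw [abs_le] at h1 h2
      constructor
      · constructor
        · have : ((-⌈R⌉ : ℤ) : ℝ) ≤ (x.1 : ℝ) := by push_cast; linarith [Int.le_ceil R]
          exact_mod_cast this
        · exact_mod_cast le_trans h1.2 (Int.le_ceil R)
      · constructor
        · have : ((-⌈R⌉ : ℤ) : ℝ) ≤ (x.2 : ℝ) := by push_cast; linarith [Int.le_ceil R]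
          exact_mod_cast this
        · exact_mod_cast le_trans h2.2 (Int.le_ceil R)
    exact Set.Finite.subset ((Set.finite_Icc _ _).prod (Set.finite_Icc _ _)) hsub
  set l : Set (ℤ × ℤ) := {x : ℤ × ℤ | dotp u (coev x) = 0} with hl
  set P : Set (ℤ × ℤ) := {x : ℤ × ℤ | 0 < dotp u (coev x)} with hP
  set B : Set (ℤ × ℤ) := Hu ∪ l ∪ H with hB
  -- B is closed under the dynamics
  have hBclosed : ∀ x : ℤ × ℤ, θ ≤ (B ∩ nbhd K x).ncard → x ∈ B := by
    intro x hx
    by_contra hxB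
    have hxHu : x ∉ Hu := fun hh => hxB (Or.inl (Or.inl hh))
    have hxl : x ∉ l := fun hh => hxB (Or.inl (Or.inr hh))
    have hxH : x ∉ H := fun hh => hxB (Or.inr hh)
    have hc : 0 < dotp u (coev x) := by
      rcases lt_trichotomy (dotp u (coev x)) 0 with h1 | h1 | h1
      · exact absurd (hHu ▸ (h1 : x ∈ {x : ℤ × ℤ | dotp u (coev x) < 0})) hxHu
      · exact absurd h1 hxl
      · exact h1
    have hsubB : B ∩ nbhd K x ⊆ ((x + ·) '' (K ∩ Hu)) ∪ (H ∩ P) := by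
      rintro y ⟨hyB, k, hkK, hk0, rfl⟩
      have hd : dotp u (coev (x + k)) = dotp u (coev x) + dotp u (coev k) :=
        dotp_coev_add u x k
      have hHucase : dotp u (coev (x + k)) ≤ 0 → (x + k) ∈ (x + ·) '' (K ∩ Hu) := by
        intro hle
        refine ⟨k, ⟨hkK, ?_⟩, rfl⟩
        rw [hHu]
        show dotp u (coev k) < 0
        nlinarith [hd]
      rcases hyB with (hy | hy) | hy
      · left
        apply hHucase
        rw [hHu] at hy
        exact le_of_lt hy
      · left
        apply hHucase
        exact le_of_eq hy
      · rcases le_or_gt (dotp u (coev (x + k))) 0 with h1 | h1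
        · exact Or.inl (hHucase h1)
        · exact Or.inr ⟨hy, h1⟩
    have hKHufin : (K ∩ Hu).Finite := hKfin.inter_of_left _
    have himg : ((x + ·) '' (K ∩ Hu)).ncard = (K ∩ Hu).ncard :=
      Set.ncard_image_of_injective _ (add_right_injective x)
    have hHP : (H ∩ P).ncard ≤ H.ncard - 1 := by
      have hss : H ∩ P ⊆ H \ {h} := by
        rintro y ⟨hyH, hyP⟩
        refine ⟨hyH, ?_⟩
        simp only [Set.mem_singleton_iff]
        rintro rfl
        exact absurd hhl (ne_of_gt hyP)
      calc (H ∩ P).ncard ≤ (H \ {h}).ncard :=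
            Set.ncard_le_ncard hss (hHfin.diff)
        _ = H.ncard - 1 := Set.ncard_diff_singleton_of_mem hhH
    have hcard : (B ∩ nbhd K x).ncard ≤ (K ∩ Hu).ncard + (H.ncard - 1) := by
      have hfin : (((x + ·) '' (K ∩ Hu)) ∪ (H ∩ P)).Finite :=
        (hKHufin.image _).union (hHfin.inter_of_left _)
      calc (B ∩ nbhd K x).ncard
          ≤ (((x + ·) '' (K ∩ Hu)) ∪ (H ∩ P)).ncard := Set.ncard_le_ncard hsubB hfin
        _ ≤ ((x + ·) '' (K ∩ Hu)).ncard + (H ∩ P).ncard := Set.ncard_union_le _ _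
        _ ≤ (K ∩ Hu).ncard + (H.ncard - 1) := by rw [himg]; omega
    omega
  -- the closure is contained in B
  have hBmem : B ∈ {B | Hu ∪ H ⊆ B ∧ ∀ x : ℤ × ℤ, θ ≤ (B ∩ nbhd K x).ncard → x ∈ B} := by
    refine ⟨Set.union_subset (fun y hy => Or.inl (Or.inl hy)) (fun y hy => Or.inr hy), hBclosed⟩
  have hclsub : tclosure K θ (Hu ∪ H) ⊆ B := Set.sInter_subset_of_mem hBmem
  obtain ⟨x, hxcl, hxnot, hxdot⟩ := hout
  rcases hclsub hxcl with (hx | hx) | hx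
  · exact hxnot (Or.inl hx)
  · exact hxdot hx
  · exact hxnot (Or.inr hx)
end

section
/- Let (v(n))_{n ∈ ℕ} be a non-increasing sequence in (0,1] and suppose there is a constant C ∈ ℕ such that v(n)·v(n') ≤ v(n+n') ≤ v(n−C)·v(n') for all n ≥ C and n' ≥ 0. Then there exists μ ∈ (0,1] with lim_{n→∞} v(n)^{1/n} = μ and μ^{n+C} ≤ v(n) ≤ μ^n for all n ∈ ℕ. -/
open Filter Real

/-- two-sided sub/super-multiplicativity lemma.
If `v : ℕ → ℝ` is non-increasing with values in `(0,1]` and there is `C ∈ ℕ` with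
`v n * v n' ≤ v (n + n') ≤ v (n - C) * v n'` for all `n ≥ C` and `n' ≥ 0`, then there is
`μ ∈ (0,1]` with `v n ^ (1/n) → μ` and `μ ^ (n + C) ≤ v n ≤ μ ^ n` for all `n`. -/
theorem stmt_5 (v : ℕ → ℝ) (hv_mono : Antitone v)
    (hv_pos : ∀ n, 0 < v n) (hv_le : ∀ n, v n ≤ 1)
    (C : ℕ)
    (hsuper : ∀ n n' : ℕ, C ≤ n → v n * v n' ≤ v (n + n'))
    (hsub : ∀ n n' : ℕ, C ≤ n → v (n + n') ≤ v (n - C) * v n') :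
    ∃ μ : ℝ, 0 < μ ∧ μ ≤ 1 ∧
      Filter.Tendsto (fun n : ℕ => (v n) ^ ((n : ℝ)⁻¹)) Filter.atTop (nhds μ) ∧
      ∀ n : ℕ, μ ^ (n + C) ≤ v n ∧ v n ≤ μ ^ n := by
  set f : ℕ → ℝ := fun n => -Real.log (v n) with hfdef
  have hf0 : ∀ n, 0 ≤ f n := by
    intro n
    simp only [hfdef, neg_nonneg]
    exact Real.log_nonpos (hv_pos n).le (hv_le n)
  have hfmono : Monotone f := by
    intro a b hab
    simp only [hfdef, neg_le_neg_iff]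
    exact Real.log_le_log (hv_pos b) (hv_mono hab)
  -- subadditivity of f for n ≥ C
  have hfsub : ∀ n n' : ℕ, C ≤ n → f (n + n') ≤ f n + f n' := by
    intro n n' hn
    have h := hsuper n n' hn
    have h2 := Real.log_le_log (mul_pos (hv_pos n) (hv_pos n')) h
    rw [Real.log_mul (hv_pos n).ne' (hv_pos n').ne'] at h2
    simp only [hfdef]; linarith
  -- superadditivity with gap C
  have hgap : ∀ a b : ℕ, f a + f b ≤ f (a + b + C) := by
    intro a b
    have h := hsub (a + C) b (Nat.le_add_left C a)
    rw [Nat.add_sub_cancel] at h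
    have h2 := Real.log_le_log (hv_pos _) h
    rw [Real.log_mul (hv_pos a).ne' (hv_pos b).ne'] at h2
    have he : a + C + b = a + b + C := by ring
    rw [he] at h2
    simp only [hfdef]; linarith
  -- shifted function is fully subadditive
  set F : ℕ → ℝ := fun n => f n + f C with hFdef
  have hFsub : Subadditive F := by
    intro m n
    by_cases hm : C ≤ m
    · have := hfsub m n hm
      simp only [hFdef]; linarith [hf0 C]
    · have h1 : f (m + n) ≤ f (C + n) := hfmono (by omega)
      have h2 : f (C + n) ≤ f C + f n := hfsub C n le_rfl
      simp only [hFdef]; linarith [hf0 m]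
  have hbdd : BddBelow (Set.range fun n : ℕ => F n / n) := by
    refine ⟨0, ?_⟩
    rintro x ⟨n, rfl⟩
    have := hf0 n; have := hf0 C
    positivity
  set L : ℝ := hFsub.lim with hLdef
  have hFlim : Tendsto (fun n : ℕ => F n / n) atTop (nhds L) := hFsub.tendsto_lim hbdd
  have hflim : Tendsto (fun n : ℕ => f n / n) atTop (nhds L) := by
    have h0 : Tendsto (fun n : ℕ => f C / n) atTop (nhds 0) :=
      tendsto_const_div_atTop_nhds_zero_nat (f C)
    have := hFlim.sub h0
    rw [sub_zero] at this
    refine this.congr (fun n => ?_)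
    simp only [hFdef, add_div]; ring
  have hL0 : 0 ≤ L := by
    refine ge_of_tendsto' hflim (fun n => ?_)
    have := hf0 n; positivity
  -- lower bound: (m:ℝ) * L ≤ f m
  have hlower : ∀ m : ℕ, (m : ℝ) * L ≤ f m := by
    intro m
    rcases Nat.eq_zero_or_pos m with rfl | hm
    · simpa using hf0 0
    -- chain: f (k*m) ≤ f (C*m) + (k - C) * f m for k ≥ C
    have chain : ∀ k : ℕ, C ≤ k → f (k * m) ≤ f (C * m) + ((k : ℝ) - C) * f m := by
      intro k hk
      induction k, hk using Nat.le_induction with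
      | base => simp
      | succ k hk ih =>
        have hkm : C ≤ k * m := le_trans hk (Nat.le_mul_of_pos_right k hm)
        have h1 : f ((k + 1) * m) ≤ f (k * m) + f m := by
          have := hfsub (k * m) m hkm
          rwa [show k * m + m = (k + 1) * m by ring] at this
        push_cast
        push_cast at ih
        nlinarith [hf0 m]
    have key : L ≤ f m / m := by
      set A : ℝ := f (C * m) + f C + C * f m with hA
      have glim : Tendsto (fun k : ℕ => A / m / k + f m / m) atTop (nhds (f m / m)) := by
        have h0 : Tendsto (fun k : ℕ => A / m / k) atTop (nhds 0) :=
          tendsto_const_div_atTop_nhds_zero_nat (A / m)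
        simpa using h0.add tendsto_const_nhds
      refine ge_of_tendsto glim ?_
      filter_upwards [eventually_ge_atTop (C + 1)] with k hk
      have hkC : C ≤ k := by omega
      have hk0 : (0 : ℝ) < k := by exact_mod_cast Nat.pos_of_ne_zero (by omega)
      have hm0 : (0 : ℝ) < m := by exact_mod_cast hm
      have hkmne : k * m ≠ 0 := Nat.mul_ne_zero (by omega) (by omega)
      have h2 : L ≤ F (k * m) / ((k * m : ℕ) : ℝ) := hFsub.lim_le_div hbdd hkmne
      have hCnn : (0 : ℝ) ≤ (C : ℝ) := Nat.cast_nonneg C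
      have h6 : F (k * m) ≤ A + k * f m := by
        have h5 := chain k hkC
        have : ((k : ℝ) - C) * f m ≤ (k : ℝ) * f m + C * f m := by
          nlinarith [mul_nonneg hCnn (hf0 m)]
        simp only [hFdef, hA]
        linarith
      have hkm0 : (0 : ℝ) < ((k * m : ℕ) : ℝ) := by
        push_cast; positivity
      have h7 : F (k * m) / ((k * m : ℕ) : ℝ) ≤ A / m / k + f m / m := by
        rw [div_le_iff₀ hkm0]
        have he : (A / m / k + f m / m) * ((k * m : ℕ) : ℝ) = A + k * f m := by
          push_cast
          field_simp
        rw [he]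
        exact h6
      linarith
    have hm0 : (0 : ℝ) < m := by exact_mod_cast hm
    calc (m : ℝ) * L ≤ (m : ℝ) * (f m / m) := by nlinarith
      _ = f m := by field_simp
  -- upper bound: f n ≤ (n + C) * L
  have hupper : ∀ n : ℕ, f n ≤ ((n : ℝ) + C) * L := by
    intro n
    rcases Nat.eq_zero_or_pos (n + C) with hnC | hnC
    · obtain ⟨hn0, hC0⟩ : n = 0 ∧ C = 0 := by omega
      subst hn0; subst hC0
      have h00 := hgap 0 0
      norm_num at h00
      push_cast
      linarith [hf0 0]
    -- Lemma A: k * f n ≤ f (k * (n + C)) for k ≥ 1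
    have lemA : ∀ k : ℕ, 1 ≤ k → (k : ℝ) * f n ≤ f (k * (n + C)) := by
      intro k hk
      induction k, hk using Nat.le_induction with
      | base =>
        simpa using hfmono (show n ≤ 1 * (n + C) by omega)
      | succ k hk ih =>
        have h1 : f (k * (n + C)) + f n ≤ f (k * (n + C) + n + C) := hgap _ n
        have he : k * (n + C) + n + C = (k + 1) * (n + C) := by ring
        rw [he] at h1
        push_cast
        linarith
    have hsubseq : Tendsto (fun k : ℕ => f (k * (n + C)) / ((k * (n + C) : ℕ) : ℝ))
        atTop (nhds L) := by
      refine hflim.comp ?_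
      exact tendsto_atTop_mono (fun k => Nat.le_mul_of_pos_right k hnC) tendsto_id
    have key : f n / ((n : ℝ) + C) ≤ L := by
      refine ge_of_tendsto hsubseq ?_
      filter_upwards [eventually_ge_atTop 1] with k hk
      have hk0 : (0 : ℝ) < k := by exact_mod_cast Nat.pos_of_ne_zero (by omega)
      have hnC0 : (0 : ℝ) < (n : ℝ) + C := by
        have h := Nat.cast_pos (α := ℝ) |>.mpr hnC
        push_cast at h
        exact h
      have hkm0 : (0 : ℝ) < ((k * (n + C) : ℕ) : ℝ) := by
        push_cast; positivity
      rw [div_le_div_iff₀ hnC0 hkm0]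
      have h1 := lemA k hk
      have h2 := mul_le_mul_of_nonneg_right h1 hnC0.le
      push_cast
      push_cast at h2
      nlinarith
    have hnC0 : (0 : ℝ) < (n : ℝ) + C := by exact_mod_cast hnC
    calc f n = (f n / ((n : ℝ) + C)) * ((n : ℝ) + C) := by field_simp
      _ ≤ L * ((n : ℝ) + C) := by nlinarith
      _ = ((n : ℝ) + C) * L := by ring
  -- define μ
  refine ⟨Real.exp (-L), Real.exp_pos _, by simpa using hL0, ?_, ?_⟩
  · -- limit
    have h1 : Tendsto (fun n : ℕ => Real.exp (-(f n / n))) atTop (nhds (Real.exp (-L))) :=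
      (Real.continuous_exp.tendsto _).comp hflim.neg
    refine h1.congr' ?_
    filter_upwards [eventually_ge_atTop 1] with n hn
    have hn0 : (0 : ℝ) < n := by exact_mod_cast hn
    rw [Real.rpow_def_of_pos (hv_pos n)]
    congr 1
    simp only [hfdef]
    rw [neg_div, neg_neg, div_eq_mul_inv]
  · -- bounds
    intro n
    constructor
    · have h1 : Real.exp (-L) ^ (n + C) = Real.exp (-(((n : ℝ) + C) * L)) := by
        rw [← Real.exp_nat_mul]
        push_cast
        ring_nf
      rw [h1, ← Real.exp_log (hv_pos n)]
      apply Real.exp_le_exp.mpr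
      have := hupper n
      simp only [hfdef] at this
      linarith
    · have h1 : Real.exp (-L) ^ n = Real.exp (-((n : ℝ) * L)) := by
        rw [← Real.exp_nat_mul]
        ring_nf
      rw [h1, ← Real.exp_log (hv_pos n)]
      apply Real.exp_le_exp.mpr
      have := hlower n
      simp only [hfdef] at this
      linarith
end

section
/- The sharp threshold constant λ is finite: taking the sequence D_n = D[2^n] of symmetric droplets with all dimensions equal to 2^n gives Σ_{n∈ℤ} W(D[2^n], D[2^{n+1}]) < ∞. -/
set_option maxHeartbeats 1000000

open scoped ENNReal


-- nat side: Summable (fun n : ℕ => 2^n * g(2^n)) given bounds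
private lemma stmt11_nat (c : ℝ) (hc : 0 < c) :
    Summable (fun n : ℕ => (2:ℝ)^n * (-Real.log (1 - Real.exp (-(c * 2^n))))) := by
  set r := Real.exp (-(c/2)) with hr
  have hr0 : 0 < r := Real.exp_pos _
  have hr1 : r < 1 := Real.exp_lt_one_iff.mpr (by linarith)
  have hK1 : 0 < (1 - Real.exp (-c))⁻¹ := by
    have : Real.exp (-c) < 1 := Real.exp_lt_one_iff.mpr (by linarith)
    exact inv_pos.mpr (by linarith)
  set K1 := (1 - Real.exp (-c))⁻¹
  apply Summable.of_nonneg_of_le (f := fun n : ℕ => (K1 * (16 / c^2)) * r^n)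
  · intro n
    have hx : (0:ℝ) < 2^n := by positivity
    have h1 : Real.exp (-(c * 2^n)) < 1 := Real.exp_lt_one_iff.mpr (by nlinarith)
    have := Real.log_nonpos (x := 1 - Real.exp (-(c * 2^n)))
      (by have := Real.exp_pos (-(c * 2^n)); linarith) (by have := Real.exp_pos (-(c * 2^n)); linarith)
    nlinarith
  · intro n
    set x : ℝ := 2^n with hxdef
    have hx1 : (1:ℝ) ≤ x := one_le_pow₀ (by norm_num)
    have hx0 : (0:ℝ) < x := by linarith
    -- g x ≤ K1 * exp(-(c*x))  (proved as aux above; inline)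
    have hg : -Real.log (1 - Real.exp (-(c * x))) ≤ K1 * Real.exp (-(c * x)) := by
      set y := Real.exp (-(c * x)) with hy
      have hy0 : 0 < y := Real.exp_pos _
      have hyc : y ≤ Real.exp (-c) := Real.exp_le_exp.mpr (by nlinarith)
      have hec : Real.exp (-c) < 1 := Real.exp_lt_one_iff.mpr (by linarith)
      have h1 : 0 < 1 - Real.exp (-c) := by linarith
      have h2 : 0 < 1 - y := by linarith
      have hlog : Real.log (1 - y)⁻¹ ≤ (1 - y)⁻¹ - 1 :=
        Real.log_le_sub_one_of_pos (by positivity)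
      rw [Real.log_inv] at hlog
      have h3 : (1 - y)⁻¹ - 1 = y / (1 - y) := by field_simp; ring
      have h4 : y / (1 - y) ≤ y / (1 - Real.exp (-c)) :=
        div_le_div_of_nonneg_left hy0.le h1 (by linarith)
      have h5 : y / (1 - Real.exp (-c)) = K1 * y := div_eq_inv_mul _ _
      linarith
    -- exp(-(c*x)) = exp(-(c/2)*x) * exp(-(c/2)*x)
    have hsplit : Real.exp (-(c * x)) = Real.exp (-(c/2) * x) * Real.exp (-(c/2) * x) := by
      rw [← Real.exp_add]; ring_nf
    -- x * exp(-(c/2)*x) ≤ 16/c²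
    have hb : x * Real.exp (-(c/2) * x) ≤ 16 / c^2 := by
      have h6 := Real.add_one_le_exp ((c/2) * x / 2)
      have h7 : Real.exp ((c/2) * x) = Real.exp ((c/2) * x / 2) * Real.exp ((c/2) * x / 2) := by
        rw [← Real.exp_add]; ring_nf
      have h8 : c^2 * x^2 / 16 ≤ Real.exp ((c/2) * x) := by
        nlinarith [sq_nonneg (Real.exp (c/2*x/2) - (c/2*x/2+1)), Real.exp_pos (c/2*x/2), mul_pos hc hx0]
      have h9 : Real.exp (-(c/2) * x) * Real.exp ((c/2) * x) = 1 := by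
        rw [← Real.exp_add]; ring_nf; exact Real.exp_zero
      have h10 : 0 < Real.exp (-(c/2) * x) := Real.exp_pos _
      have h11 : x * Real.exp (-(c/2) * x) ≤ 16 / (c^2 * x) := by
        rw [le_div_iff₀ (by positivity)]
        nlinarith
      calc x * Real.exp (-(c/2) * x) ≤ 16 / (c^2 * x) := h11
        _ ≤ 16 / c^2 := by
            apply div_le_div_of_nonneg_left (by norm_num) (by positivity)
            nlinarith
    -- exp(-(c/2)*x) ≤ r^n
    have hgeo : Real.exp (-(c/2) * x) ≤ r ^ n := by
      have hxn : (n:ℝ) ≤ x := by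
        have := (Nat.lt_two_pow_self (n := n))
        calc (n:ℝ) ≤ 2^n - 1 := by
              have : (n:ℝ) + 1 ≤ 2^n := by exact_mod_cast (Nat.lt_two_pow_self (n := n))
              linarith
          _ ≤ x := by rw [hxdef]; norm_num
      calc Real.exp (-(c/2) * x) ≤ Real.exp (-(c/2) * n) := by
            apply Real.exp_le_exp.mpr; nlinarith
        _ = r ^ n := by rw [hr, ← Real.exp_nat_mul]; ring_nf
    calc x * (-Real.log (1 - Real.exp (-(c * x))))
        ≤ x * (K1 * Real.exp (-(c * x))) := by
          apply mul_le_mul_of_nonneg_left hg hx0.le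
      _ = K1 * ((x * Real.exp (-(c/2) * x)) * Real.exp (-(c/2) * x)) := by
          rw [hsplit]; ring
      _ ≤ K1 * ((16 / c^2) * r^n) := by
          apply mul_le_mul_of_nonneg_left _ hK1.le
          apply mul_le_mul hb hgeo (Real.exp_pos _).le (by positivity)
      _ = (K1 * (16 / c^2)) * r^n := by ring
  · exact (summable_geometric_of_lt_one hr0.le hr1).mul_left _


private lemma stmt11_neg (c : ℝ) (hc : 0 < c) :
    Summable (fun n : ℕ => ((2:ℝ)⁻¹)^n * (-Real.log (1 - Real.exp (-(c * (2⁻¹)^n))))) := by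
  have hs1 : Summable (fun n : ℕ => (|Real.log c| + c) * ((2:ℝ)⁻¹)^n) :=
    (summable_geometric_of_lt_one (by norm_num) (by norm_num)).mul_left _
  have hs2 : Summable (fun n : ℕ => Real.log 2 * ((n:ℝ) * ((2:ℝ)⁻¹)^n)) := by
    have := summable_pow_mul_geometric_of_norm_lt_one (R := ℝ) 1 (r := (2:ℝ)⁻¹) (by
      rw [norm_inv]; simp; norm_num)
    simpa using this.mul_left (Real.log 2)
  apply Summable.of_nonneg_of_le (f := fun n : ℕ =>
    (|Real.log c| + c) * ((2:ℝ)⁻¹)^n + Real.log 2 * ((n:ℝ) * ((2:ℝ)⁻¹)^n))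
  · intro n
    set x : ℝ := (2⁻¹)^n with hxdef
    have hx0 : (0:ℝ) < x := by positivity
    have h1 : Real.exp (-(c * x)) < 1 := Real.exp_lt_one_iff.mpr (by nlinarith)
    have h2 : 0 < Real.exp (-(c * x)) := Real.exp_pos _
    have := Real.log_nonpos (x := 1 - Real.exp (-(c * x))) (by linarith) (by linarith)
    nlinarith
  · intro n
    set x : ℝ := (2⁻¹)^n with hxdef
    have hx0 : (0:ℝ) < x := by positivity
    have hx1 : x ≤ 1 := pow_le_one₀ (by norm_num) (by norm_num)
    -- small-x bound: g x ≤ -log(c*x) + c*x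
    have hg : -Real.log (1 - Real.exp (-(c * x))) ≤ -Real.log (c * x) + c * x := by
      have hcx : 0 < c * x := by positivity
      have he : 0 < Real.exp (-(c * x)) := Real.exp_pos _
      have hmul : Real.exp (-(c * x)) * Real.exp (c * x) = 1 := by
        rw [← Real.exp_add]; simp
      have hexp := Real.add_one_le_exp (c * x)
      have key : c * x * Real.exp (-(c * x)) ≤ 1 - Real.exp (-(c * x)) := by nlinarith
      have hpos : 0 < c * x * Real.exp (-(c * x)) := by positivity
      have := Real.log_le_log hpos key
      rw [Real.log_mul (ne_of_gt hcx) (ne_of_gt he), Real.log_exp] at this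
      linarith
    have hlogx : Real.log (c * x) = Real.log c - n * Real.log 2 := by
      rw [Real.log_mul (ne_of_gt hc) (ne_of_gt hx0), hxdef, Real.log_pow, Real.log_inv]
      push_cast; ring
    have hlc : -Real.log c ≤ |Real.log c| := neg_le_abs _
    have hl2 : 0 ≤ Real.log 2 := Real.log_nonneg (by norm_num)
    have hn0 : (0:ℝ) ≤ n := Nat.cast_nonneg n
    calc x * (-Real.log (1 - Real.exp (-(c * x))))
        ≤ x * (-Real.log (c * x) + c * x) := mul_le_mul_of_nonneg_left hg hx0.le
      _ = x * (-Real.log c + n * Real.log 2 + c * x) := by rw [hlogx]; ring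
      _ ≤ (|Real.log c| + c) * x + Real.log 2 * ((n:ℝ) * x) := by
          nlinarith [mul_le_mul_of_nonneg_left hlc hx0.le, mul_le_mul_of_nonneg_left hx1 (mul_pos hc hx0).le]
  · exact hs1.add hs2


private lemma stmt11_G (c : ℝ) (hc : 0 < c) :
    Summable (fun n : ℤ => (2:ℝ)^n * (-Real.log (1 - Real.exp (-(c * 2^n))))) := by
  rw [summable_int_iff_summable_nat_and_neg]
  constructor
  · have := stmt11_nat c hc
    simpa [zpow_natCast] using this
  · have := stmt11_neg c hc
    simpa [zpow_neg, zpow_natCast, ← inv_pow] using this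

/-- the sharp threshold constant `λ` is finite: taking the sequence
`D_n = D[2^n]` of symmetric droplets with all dimensions equal to `2^n` (so that the
location of `D[2^n] ⊆ D[2^{n+1}]` has entries `2^n a_u` for a fixed vector `a ≥ 0` of
radii of `D[1]`) gives `Σ_{n ∈ ℤ} W(D[2^n], D[2^{n+1}]) < ∞`, where
`W(D,D') = Σ_{u ∈ S_α} h^u(m_u) s_u` and each `h^u` satisfies
`h^u(x) ≤ -log(1 - e^{-c x})`. -/
theorem stmt_11 (Sα : Type*) [Fintype Sα] (c : ℝ) (hc : 0 < c)
    (h : Sα → ℝ → ℝ)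
    (hpos : ∀ u : Sα, ∀ x > (0 : ℝ), 0 < h u x)
    (hupper : ∀ u : Sα, ∀ x > (0 : ℝ), h u x ≤ -Real.log (1 - Real.exp (-(c * x))))
    (a : Sα → ℝ) (ha : ∀ u, 0 ≤ a u) :
    (∑' n : ℤ, ENNReal.ofReal (∑ u : Sα, h u ((2 : ℝ) ^ n) * ((2 : ℝ) ^ n * a u))) < ⊤ := by
  set A := ∑ u : Sα, a u with hA
  have hG := stmt11_G c hc
  set F : ℤ → ℝ := fun n => ∑ u : Sα, h u ((2:ℝ)^n) * ((2:ℝ)^n * a u) with hFdef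
  have hx : ∀ n : ℤ, (0:ℝ) < (2:ℝ)^n := fun n => zpow_pos (by norm_num) n
  have hF0 : ∀ n, 0 ≤ F n := fun n => Finset.sum_nonneg fun u _ =>
    mul_nonneg (hpos u _ (hx n)).le (mul_nonneg (hx n).le (ha u))
  have hFle : ∀ n, F n ≤ ((2:ℝ)^n * (-Real.log (1 - Real.exp (-(c * 2^n))))) * A := by
    intro n
    calc F n ≤ ∑ u : Sα, (-Real.log (1 - Real.exp (-(c * 2^n)))) * ((2:ℝ)^n * a u) :=
          Finset.sum_le_sum fun u _ => mul_le_mul_of_nonneg_right (hupper u _ (hx n))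
            (mul_nonneg (hx n).le (ha u))
      _ = ((2:ℝ)^n * (-Real.log (1 - Real.exp (-(c * 2^n))))) * A := by
          rw [← Finset.mul_sum, ← Finset.mul_sum]; ring
  have hFs : Summable F := Summable.of_nonneg_of_le hF0 hFle (hG.mul_right A)
  rw [← ENNReal.ofReal_tsum_of_nonneg hF0 hFs]
  exact ENNReal.ofReal_lt_top
end

section
/- Let (a^{(0)}, a^{(∞)}) ∈ ℝ^{S_α} × ℝ^{S_α} with a^{(0)} ≤ a^{(∞)} componentwise and fix T > 0. Define a finite sequence a^{(0)} = b_0 ≤ b_1 ≤ … ≤ b_N = a^{(∞)} by repeatedly increasing a single coordinate by min(T, remaining gap). If along this sequence, whenever coordinate u is increased at step i the droplet dimension m_u(b_i) is at least the dimension m_u(a^{(0)}), then Σ_{i=0}^{N−1} W(D[b_i], D[b_{i+1}]) ≤ W(D[a^{(0)}], D[a^{(∞)}]), where W(D,D′) = Σ_{u∈S_α} h^u(m_u(D))·(a'_u − a_u) with h^u non-increasing. -/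
/-- the refinement step in the truncation lemma. Given radii
`a⁰ ≤ a^∞` and `T > 0`, define a finite sequence `a⁰ = b₀ ≤ b₁ ≤ … ≤ b_N = a^∞` by
repeatedly increasing a single coordinate `u_i` by `min(T, remaining gap)`. If along
this sequence, whenever coordinate `u_i` is increased at step `i`, the droplet dimension
`m_{u_i}(b_i)` is at least `m_{u_i}(a⁰)`, then
`Σ_i W(D[b_i], D[b_{i+1}]) ≤ W(D[a⁰], D[a^∞])`, where
`W(D[a], D[a']) = Σ_u h^u(m_u(a)) (a'_u - a_u)` with each `h^u : (0,∞) → (0,∞)`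
non-increasing and `m` the droplet dimension function. -/
theorem stmt_19 (ι : Type*) [Fintype ι] [DecidableEq ι]
    (h : ι → ℝ → ℝ)
    (hanti : ∀ u : ι, ∀ x y : ℝ, 0 < x → x ≤ y → h u y ≤ h u x)
    (hpos : ∀ u : ι, ∀ x : ℝ, 0 < x → 0 < h u x)
    (m : (ι → ℝ) → ι → ℝ)
    (T : ℝ) (hT : 0 < T)
    (a0 aI : ι → ℝ) (hle : a0 ≤ aI)
    (hm0 : ∀ u : ι, 0 < m a0 u)
    (N : ℕ) (b : Fin (N + 1) → ι → ℝ)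
    (hb0 : b 0 = a0) (hbN : b (Fin.last N) = aI)
    (u : Fin N → ι)
    (hstep : ∀ i : Fin N,
      b i.succ = Function.update (b i.castSucc) (u i)
        (b i.castSucc (u i) + min T (aI (u i) - b i.castSucc (u i))))
    (hdim : ∀ i : Fin N, m a0 (u i) ≤ m (b i.castSucc) (u i)) :
    (∑ i : Fin N, ∑ v : ι, h v (m (b i.castSucc) v) * (b i.succ v - b i.castSucc v)) ≤
      ∑ v : ι, h v (m a0 v) * (aI v - a0 v) := by
  -- b stays below aI
  have hbI : ∀ i : Fin (N+1), b i ≤ aI := by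
    intro i
    induction i using Fin.induction with
    | zero => rw [hb0]; exact hle
    | succ i ih =>
      rw [hstep i]
      intro v
      by_cases hv : v = u i
      · subst hv
        rw [Function.update_self]
        have := min_le_right T (aI (u i) - b i.castSucc (u i))
        linarith
      · rw [Function.update_of_ne hv]; exact ih v
  have hδ : ∀ i : Fin N, 0 ≤ min T (aI (u i) - b i.castSucc (u i)) := by
    intro i
    exact le_min hT.le (sub_nonneg.2 (hbI i.castSucc (u i)))
  -- inner sum collapses
  have hinner : ∀ (i : Fin N) (g : ι → ℝ),
      ∑ v : ι, g v * (b i.succ v - b i.castSucc v)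
        = g (u i) * min T (aI (u i) - b i.castSucc (u i)) := by
    intro i g
    rw [hstep i, Finset.sum_eq_single (u i)]
    · simp
    · intro v _ hv
      rw [Function.update_of_ne hv]; simp
    · intro hmem; exact absurd (Finset.mem_univ _) hmem
  -- telescoping
  have htel : ∀ v : ι, aI v - a0 v = ∑ i : Fin N, (b i.succ v - b i.castSucc v) := by
    intro v
    have key := Finset.sum_range_sub
      (fun k => b ⟨min k N, Nat.lt_succ_of_le (min_le_right _ _)⟩ v) N
    have h1 : ∑ i : Fin N, (b i.succ v - b i.castSucc v)
        = ∑ k ∈ Finset.range N,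
            (b ⟨min (k+1) N, Nat.lt_succ_of_le (min_le_right _ _)⟩ v
              - b ⟨min k N, Nat.lt_succ_of_le (min_le_right _ _)⟩ v) := by
      rw [Finset.sum_range fun k => _]
      apply Finset.sum_congr rfl
      intro i _
      congr 1
      · congr 1
        ext
        simp [Fin.val_succ, Nat.min_eq_left (Nat.succ_le_of_lt i.isLt)]
      · congr 1
        ext
        simp [Nat.min_eq_left i.isLt.le]
    rw [h1, key]
    simp only [Nat.min_self, Nat.zero_min]
    have e1 : (⟨N, Nat.lt_succ_of_le le_rfl⟩ : Fin (N+1)) = Fin.last N := rfl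
    have e0 : (⟨0, Nat.lt_succ_of_le (Nat.zero_le N)⟩ : Fin (N+1)) = 0 := rfl
    rw [e1, e0, hbN, hb0]
  calc (∑ i : Fin N, ∑ v : ι, h v (m (b i.castSucc) v) * (b i.succ v - b i.castSucc v))
      = ∑ i : Fin N, h (u i) (m (b i.castSucc) (u i))
          * min T (aI (u i) - b i.castSucc (u i)) := by
        exact Finset.sum_congr rfl fun i _ => hinner i _
    _ ≤ ∑ i : Fin N, h (u i) (m a0 (u i))
          * min T (aI (u i) - b i.castSucc (u i)) := by
        apply Finset.sum_le_sum
        intro i _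
        exact mul_le_mul_of_nonneg_right
          (hanti (u i) _ _ (hm0 (u i)) (hdim i)) (hδ i)
    _ = ∑ i : Fin N, ∑ v : ι, h v (m a0 v) * (b i.succ v - b i.castSucc v) := by
        exact Finset.sum_congr rfl fun i _ => (hinner i (fun v => h v (m a0 v))).symm
    _ = ∑ v : ι, h v (m a0 v) * (aI v - a0 v) := by
        rw [Finset.sum_comm]
        apply Finset.sum_congr rfl
        intro v _
        rw [← Finset.mul_sum, ← htel v]
end
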